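/- Let n ≥ 3, let B be the adjacency matrix of the book graph B_n = K_{1,n} □ K₂, and let D be the (2n+2)×(2n+2) matrix D = [[−(√n/2)·I, (−√n/2 + 1)·I],[(−√n/2 + 1)·I, −(√n/2)·I]] where I = I_{n+1}. Then the matrix C = B − D is symmetric, has eigenvalues 2√n (multiplicity 1), 0 (multiplicity n), √n (multiplicity n), and −√n (multiplicity 1); in particular C has nullity n and exactly one negative eigenvalue. -/

import Mathlib

open Matrix Finset Module

set_option maxHeartbeats 1000000

lemma vvm {m : Type*} [Fintype m] (u v w x : m → ℝ) :
    vecMulVec u v * vecMulVec w x = (v ⬝ᵥ w) • vecMulVec u x := by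
  ext i j
  simp only [mul_apply, vecMulVec_apply, Matrix.smul_apply, dotProduct, smul_eq_mul, Finset.mul_sum,
    Finset.sum_mul]
  congr 1; ext k; ring

lemma trace_vvm {m : Type*} [Fintype m] (u v : m → ℝ) :
    (vecMulVec u v).trace = u ⬝ᵥ v := by
  simp [Matrix.trace, Matrix.diag, vecMulVec_apply, dotProduct]

lemma trace_pow_eq {m : Type*} [Fintype m] [DecidableEq m] (M : Matrix m m ℝ)
    (hM : M.IsHermitian) (k : ℕ) : (M ^ k).trace = ∑ i, hM.eigenvalues i ^ k := by
  set U : Matrix m m ℝ := (hM.eigenvectorUnitary : Matrix m m ℝ) with hU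
  have hU1 : star U * U = 1 := by
    have := hM.eigenvectorUnitary.2
    rw [Matrix.mem_unitaryGroup_iff'] at this
    exact this
  have hU2 : U * star U = 1 := by
    rw [mul_eq_one_comm] at hU1; exact hU1
  set Dg : Matrix m m ℝ := Matrix.diagonal (RCLike.ofReal ∘ hM.eigenvalues) with hDg
  have hMk : M ^ k = U * Dg ^ k * star U := by
    induction k with
    | zero => simp [hU2]
    | succ k ih =>
      rw [pow_succ, ih]
      conv_lhs => rw [hM.spectral_theorem, Unitary.conjStarAlgAut_apply]
      have h1 : U * Dg ^ k * star U * (U * Dg * star U)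
          = U * Dg ^ k * ((star U * U) * (Dg * star U)) := by
        simp only [Matrix.mul_assoc]
      rw [h1, hU1, Matrix.one_mul, pow_succ]
      simp only [Matrix.mul_assoc]
  rw [hMk, Matrix.trace_mul_cycle, hU1, Matrix.one_mul, hDg,
    Matrix.diagonal_pow, Matrix.trace_diagonal]
  simp

lemma fromBlocks_sub' {l m n o α : Type*} [Sub α] (A : Matrix n l α) (B : Matrix n m α)
    (C : Matrix o l α) (D : Matrix o m α) (A' : Matrix n l α) (B' : Matrix n m α)
    (C' : Matrix o l α) (D' : Matrix o m α) :
    fromBlocks A B C D - fromBlocks A' B' C' D'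
      = fromBlocks (A - A') (B - B') (C - C') (D - D') := by
  ext i j
  rcases i with i | i <;> rcases j with j | j <;> rfl

lemma trace_fromBlocks' {n o α : Type*} [Fintype n] [Fintype o] [AddCommMonoid α]
    (A : Matrix n n α) (B : Matrix n o α) (C : Matrix o n α) (D : Matrix o o α) :
    (fromBlocks A B C D).trace = A.trace + D.trace := by
  simp [Matrix.trace, Matrix.diag, Fintype.sum_sum_type, fromBlocks]

theorem stmt4 (n : ℕ) (hn : 3 ≤ n)
    (A : Matrix (Fin (n + 1)) (Fin (n + 1)) ℝ)
    (hAdef : ∀ i j, A i j =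
      if (i = 0 ∧ j ≠ 0) ∨ (j = 0 ∧ i ≠ 0) then 1 else 0)
    (B D C : Matrix (Fin (n + 1) ⊕ Fin (n + 1)) (Fin (n + 1) ⊕ Fin (n + 1)) ℝ)
    (hB : B = Matrix.fromBlocks A 1 1 A)
    (hD : D = Matrix.fromBlocks
      ((-(Real.sqrt n / 2)) • 1) ((-(Real.sqrt n) / 2 + 1) • 1)
      ((-(Real.sqrt n) / 2 + 1) • 1) ((-(Real.sqrt n / 2)) • 1))
    (hC : C = B - D) :
    ∃ hH : C.IsHermitian,
      (Finset.univ.filter (fun i => hH.eigenvalues i = 2 * Real.sqrt n)).card = 1 ∧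
      (Finset.univ.filter (fun i => hH.eigenvalues i = 0)).card = n ∧
      (Finset.univ.filter (fun i => hH.eigenvalues i = Real.sqrt n)).card = n ∧
      (Finset.univ.filter (fun i => hH.eigenvalues i = -Real.sqrt n)).card = 1 ∧
      Module.finrank ℝ (LinearMap.ker C.mulVecLin) = n ∧
      (Finset.univ.filter (fun i => hH.eigenvalues i < 0)).card = 1 := by
  classical
  have hnR : (3:ℝ) ≤ (n:ℝ) := by exact_mod_cast hn
  set x := Real.sqrt n with hxdef
  have hx2 : x ^ 2 = n := Real.sq_sqrt (by positivity)
  have hxpos : 0 < x := Real.sqrt_pos.mpr (by linarith)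
  have hxne : x ≠ 0 := ne_of_gt hxpos
  -- A as sum of outer products
  set e : Fin (n+1) → ℝ := fun i => if i = 0 then 1 else 0 with he
  set l : Fin (n+1) → ℝ := fun i => if i = 0 then 0 else 1 with hl
  have hA : A = vecMulVec e l + vecMulVec l e := by
    ext i j
    rw [hAdef, Matrix.add_apply, vecMulVec_apply, vecMulVec_apply]
    by_cases hi : i = 0 <;> by_cases hj : j = 0 <;> simp [hi, hj, he, hl]
  have hee : e ⬝ᵥ e = 1 := by
    simp [dotProduct, he, ite_mul, Finset.sum_ite_eq']
  have hel : e ⬝ᵥ l = 0 := by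
    apply Finset.sum_eq_zero
    intro i _
    simp only [he, hl]
    split_ifs <;> ring
  have hle : l ⬝ᵥ e = 0 := by
    apply Finset.sum_eq_zero
    intro i _
    simp only [he, hl]
    split_ifs <;> ring
  have hll : l ⬝ᵥ l = n := by
    have h1 : ∀ i, l i * l i = 1 - (if i = 0 then (1:ℝ) else 0) := by
      intro i; simp only [hl]; split_ifs <;> ring
    calc (∑ i, l i * l i) = ∑ i : Fin (n+1), (1 - if i = 0 then (1:ℝ) else 0) :=
          Finset.sum_congr rfl (fun i _ => h1 i)
      _ = (n:ℝ) := by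
          rw [Finset.sum_sub_distrib, Finset.sum_const, Finset.sum_ite_eq']
          simp
  have hA2 : A * A = (n:ℝ) • vecMulVec e e + vecMulVec l l := by
    rw [hA]
    simp only [Matrix.add_mul, Matrix.mul_add, vvm, hee, hel, hle, hll]
    simp only [zero_smul, one_smul]
    abel
  have hA3 : A * A * A = (n:ℝ) • A := by
    rw [hA2, hA]
    simp only [Matrix.add_mul, Matrix.mul_add, Matrix.smul_mul, vvm, hee, hel, hle, hll]
    simp only [zero_smul, one_smul, smul_zero, smul_add, smul_smul]
    abel
  have htrA : A.trace = 0 := by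
    rw [hA, Matrix.trace_add, trace_vvm, trace_vvm, hel, hle, add_zero]
  have htrA2 : (A * A).trace = 2 * n := by
    rw [hA2, Matrix.trace_add, Matrix.trace_smul, trace_vvm, trace_vvm, hee, hll]
    simp [smul_eq_mul]
    ring
  have htrA3 : (A * A * A).trace = 0 := by
    rw [hA3, Matrix.trace_smul, htrA, smul_zero]
  have htr1 : Matrix.trace (1 : Matrix (Fin (n+1)) (Fin (n+1)) ℝ) = (n+1 : ℝ) := by
    rw [Matrix.trace_one]
    simp
  -- block structure of C
  have hCb : C = fromBlocks (A + (x/2) • 1) ((x/2) • 1) ((x/2) • 1) (A + (x/2) • 1) := by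
    rw [hC, hB, hD, fromBlocks_sub', Matrix.fromBlocks_inj]
    refine ⟨by module, by module, by module, by module⟩
  have hAT : Aᵀ = A := by
    ext i j
    rw [Matrix.transpose_apply, hAdef j i, hAdef i j]
    by_cases hi : i = 0 <;> by_cases hj : j = 0 <;> simp [hi, hj]
  have hAH : A.IsHermitian := by
    rw [Matrix.IsHermitian]
    ext i j
    rw [Matrix.conjTranspose_apply, star_trivial]
    exact congrFun (congrFun hAT i) j
  have hH : C.IsHermitian := by
    rw [Matrix.IsHermitian, hCb, Matrix.fromBlocks_conjTranspose, Matrix.fromBlocks_inj]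
    refine ⟨?_, ?_, ?_, ?_⟩ <;>
      simp [Matrix.conjTranspose_add, Matrix.conjTranspose_smul, hAH.eq, hAT]
  -- factor matrices
  have f1 : C - x • 1 = fromBlocks (A - (x/2) • 1) ((x/2) • 1) ((x/2) • 1) (A - (x/2) • 1) := by
    rw [hCb, ← Matrix.fromBlocks_one, Matrix.fromBlocks_smul, fromBlocks_sub',
      Matrix.fromBlocks_inj]
    refine ⟨by module, by module, by module, by module⟩
  have f2 : C + x • 1 = fromBlocks (A + (3*x/2) • 1) ((x/2) • 1) ((x/2) • 1)
      (A + (3*x/2) • 1) := by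
    rw [hCb, ← Matrix.fromBlocks_one, Matrix.fromBlocks_smul, Matrix.fromBlocks_add,
      Matrix.fromBlocks_inj]
    refine ⟨by module, by module, by module, by module⟩
  have f3 : C - (2*x) • 1 = fromBlocks (A - (3*x/2) • 1) ((x/2) • 1) ((x/2) • 1)
      (A - (3*x/2) • 1) := by
    rw [hCb, ← Matrix.fromBlocks_one, Matrix.fromBlocks_smul, fromBlocks_sub',
      Matrix.fromBlocks_inj]
    refine ⟨by module, by module, by module, by module⟩
  have hxx : x * x = (n:ℝ) := by rw [← hx2]; ring
  have p1 : C * (C - x • 1) = fromBlocks (A * A) (x • A) (x • A) (A * A) := by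
    rw [f1, hCb, Matrix.fromBlocks_multiply, Matrix.fromBlocks_inj]
    refine ⟨?_, ?_, ?_, ?_⟩ <;>
    · simp only [Matrix.add_mul, Matrix.mul_add, Matrix.mul_sub, Matrix.sub_mul,
        Matrix.smul_mul, Matrix.mul_smul, Matrix.one_mul, Matrix.mul_one, smul_smul]
      module
  have p2 : (C + x • 1) * (C - (2*x) • 1)
      = fromBlocks (A * A - (2*(n:ℝ)) • 1) (x • A) (x • A) (A * A - (2*(n:ℝ)) • 1) := by
    rw [f2, f3, Matrix.fromBlocks_multiply, Matrix.fromBlocks_inj, ← hxx]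
    refine ⟨?_, ?_, ?_, ?_⟩ <;>
    · simp only [Matrix.add_mul, Matrix.mul_add, Matrix.mul_sub, Matrix.sub_mul,
        Matrix.smul_mul, Matrix.mul_smul, Matrix.one_mul, Matrix.mul_one, smul_smul]
      module
  have h4 : A * A * (A * A) = (n:ℝ) • (A * A) := by
    rw [← Matrix.mul_assoc, hA3, Matrix.smul_mul]
  have h3' : A * A * A = (n:ℝ) • A := hA3
  have h3'' : A * (A * A) = (n:ℝ) • A := by rw [← Matrix.mul_assoc]; exact hA3
  have hq : C * (C - x • 1) * (C + x • 1) * (C - (2*x) • 1) = 0 := by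
    rw [Matrix.mul_assoc, p1, p2, Matrix.fromBlocks_multiply, ← Matrix.fromBlocks_zero]
    rw [Matrix.fromBlocks_inj]
    refine ⟨?_, ?_, ?_, ?_⟩ <;>
    · simp only [Matrix.mul_sub, Matrix.sub_mul, Matrix.smul_mul, Matrix.mul_smul,
        smul_smul, h4, h3', h3'', hxx, Matrix.mul_one]
      module
  -- eigenvalues are among the four values
  have hev : ∀ i, hH.eigenvalues i = 0 ∨ hH.eigenvalues i = x ∨ hH.eigenvalues i = -x ∨
      hH.eigenvalues i = 2*x := by
    intro i
    set μ := hH.eigenvalues i with hμ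
    set v : (Fin (n+1) ⊕ Fin (n+1)) → ℝ := ⇑(hH.eigenvectorBasis i) with hvdef
    have hv : C *ᵥ v = μ • v := hH.mulVec_eigenvectorBasis i
    have hv0 : v ≠ 0 := by
      intro hz
      apply hH.eigenvectorBasis.orthonormal.ne_zero i
      ext j
      exact congrFun hz j
    have step : ∀ (c : ℝ), (C - c • 1) *ᵥ v = (μ - c) • v := by
      intro c
      rw [Matrix.sub_mulVec, hv, Matrix.smul_mulVec, Matrix.one_mulVec, sub_smul]
    have step2 : (C + x • 1) *ᵥ v = (μ + x) • v := by
      rw [Matrix.add_mulVec, hv, Matrix.smul_mulVec, Matrix.one_mulVec, add_smul]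
    have key : (C * (C - x • 1) * (C + x • 1) * (C - (2*x) • 1)) *ᵥ v
        = (μ * (μ - x) * (μ + x) * (μ - 2*x)) • v := by
      rw [← Matrix.mulVec_mulVec, step, Matrix.mulVec_smul, ← Matrix.mulVec_mulVec, step2,
        Matrix.mulVec_smul, ← Matrix.mulVec_mulVec, step, Matrix.mulVec_smul, hv]
      rw [smul_smul, smul_smul, smul_smul]
      ring_nf
    rw [hq, Matrix.zero_mulVec] at key
    have hsc : μ * (μ - x) * (μ + x) * (μ - 2*x) = 0 := by
      rcases smul_eq_zero.mp key.symm with h | h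
      · exact h
      · exact absurd h hv0
    rcases mul_eq_zero.mp hsc with h | h
    · rcases mul_eq_zero.mp h with h' | h'
      · rcases mul_eq_zero.mp h' with h'' | h''
        · exact Or.inl h''
        · exact Or.inr (Or.inl (by linarith [sub_eq_zero.mp h'']))
      · exact Or.inr (Or.inr (Or.inl (by linarith [eq_neg_of_add_eq_zero_left h'])))
    · exact Or.inr (Or.inr (Or.inr (by linarith [sub_eq_zero.mp h])))
  -- traces
  have tr1 : C.trace = ((n:ℝ)+1) * x := by
    rw [hCb, trace_fromBlocks']
    simp only [Matrix.trace_add, Matrix.trace_smul, htrA, htr1, smul_eq_mul]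
    ring
  have tr2 : (C^2).trace = (n:ℝ)^2 + 5*(n:ℝ) := by
    rw [pow_two, hCb, Matrix.fromBlocks_multiply, trace_fromBlocks']
    simp only [Matrix.add_mul, Matrix.mul_add, Matrix.smul_mul, Matrix.mul_smul,
      Matrix.mul_one, Matrix.one_mul, smul_smul, Matrix.trace_add, Matrix.trace_smul,
      htrA, htrA2, htr1, smul_eq_mul]
    linear_combination ((n:ℝ)+1) * hx2
  have tr3 : (C^3).trace = 6*(n:ℝ)*x + ((n:ℝ)+1)*x^3 := by
    have h3 : C^3 = C * C * C := by rw [pow_succ, pow_two]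
    rw [h3, hCb, Matrix.fromBlocks_multiply, Matrix.fromBlocks_multiply, trace_fromBlocks']
    simp only [Matrix.add_mul, Matrix.mul_add, Matrix.smul_mul, Matrix.mul_smul,
      Matrix.mul_one, Matrix.one_mul, smul_smul, Matrix.trace_add, Matrix.trace_smul,
      Matrix.mul_assoc, htrA, htrA2, htrA3, htr1, smul_eq_mul]
    have htrA3' : (A * (A * A)).trace = 0 := by rw [← Matrix.mul_assoc]; exact htrA3
    have htrA2' : (A * A).trace = 2*(n:ℝ) := htrA2
    rw [htrA3']
    ring
  have s1 : ∑ i, hH.eigenvalues i = ((n:ℝ)+1) * x := by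
    have h := trace_pow_eq C hH 1
    simp only [pow_one] at h
    rw [← h]; exact tr1
  have s2 : ∑ i, (hH.eigenvalues i)^2 = (n:ℝ)^2 + 5*(n:ℝ) := by
    rw [← trace_pow_eq C hH 2]; exact tr2
  have s3 : ∑ i, (hH.eigenvalues i)^3 = 6*(n:ℝ)*x + ((n:ℝ)+1)*x^3 := by
    rw [← trace_pow_eq C hH 3]; exact tr3
  refine ⟨hH, ?_⟩
  set a := (univ.filter (fun i => hH.eigenvalues i = 2*x)).card with ha
  set b := (univ.filter (fun i => hH.eigenvalues i = 0)).card with hb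
  set c := (univ.filter (fun i => hH.eigenvalues i = x)).card with hcdef
  set d := (univ.filter (fun i => hH.eigenvalues i = -x)).card with hd
  -- distinctness
  have d1 : ¬ ((0:ℝ) = 2*x) := by intro h; linarith
  have d2 : ¬ ((0:ℝ) = x) := by intro h; linarith
  have d3 : ¬ ((0:ℝ) = -x) := by intro h; linarith
  have d4 : ¬ (x = 2*x) := by intro h; linarith
  have d5 : ¬ (x = -x) := by intro h; linarith
  have d6 : ¬ (-x = 2*x) := by intro h; linarith
  have d7 : ¬ (-x = x) := by intro h; linarith
  have d8 : ¬ (2*x = x) := by intro h; linarith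
  have d9 : ¬ (2*x = -x) := by intro h; linarith
  have hsplit : ∀ f : ℝ → ℝ, f 0 = 0 →
      ∑ i, f (hH.eigenvalues i) = a * f (2*x) + c * f x + d * f (-x) := by
    intro f hf
    have key : ∀ i ∈ (univ : Finset (Fin (n+1) ⊕ Fin (n+1))),
        f (hH.eigenvalues i) = (if hH.eigenvalues i = 2*x then f (2*x) else 0) +
          ((if hH.eigenvalues i = x then f x else 0) + (if hH.eigenvalues i = -x then f (-x) else 0)) := by
      intro i _
      rcases hev i with h|h|h|h <;> rw [h] <;>
        simp [hf, hxne, d1, d2, d3, d4, d5, d6, d7, d8, d9]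
    rw [Finset.sum_congr rfl key, Finset.sum_add_distrib, Finset.sum_add_distrib,
      ← Finset.sum_filter, ← Finset.sum_filter, ← Finset.sum_filter,
      Finset.sum_const, Finset.sum_const, Finset.sum_const]
    simp only [nsmul_eq_mul, ← ha, ← hcdef, ← hd]
    ring
  have S1 : (a:ℝ) * (2*x) + (c:ℝ) * x + (d:ℝ) * (-x) = ((n:ℝ)+1) * x := by
    rw [← hsplit (fun y => y) rfl]; exact s1
  have S2 : (a:ℝ) * (2*x)^2 + (c:ℝ) * x^2 + (d:ℝ) * (-x)^2 = (n:ℝ)^2 + 5*(n:ℝ) := by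
    rw [← hsplit (fun y => y^2) (by norm_num)]; exact s2
  have S3 : (a:ℝ) * (2*x)^3 + (c:ℝ) * x^3 + (d:ℝ) * (-x)^3
      = 6*(n:ℝ)*x + ((n:ℝ)+1)*x^3 := by
    rw [← hsplit (fun y => y^3) (by norm_num)]; exact s3
  have hnne : (n:ℝ) ≠ 0 := by intro h; rw [h] at hnR; linarith
  have E1 : 2*(a:ℝ) + c - d = (n:ℝ)+1 := by
    have h1 : (2*(a:ℝ) + c - d) * x = ((n:ℝ)+1) * x := by linear_combination S1
    exact mul_right_cancel₀ hxne h1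
  have E2 : 4*(a:ℝ) + c + d = (n:ℝ)+5 := by
    have h2 : (4*(a:ℝ) + c + d) * (n:ℝ) = ((n:ℝ)+5) * (n:ℝ) := by
      linear_combination S2 - (4*(a:ℝ)+c+d)*hx2
    exact mul_right_cancel₀ hnne h2
  have E3 : 8*(a:ℝ) + c - d = (n:ℝ)+7 := by
    have h3 : (8*(a:ℝ) + c - d) * ((n:ℝ)*x) = ((n:ℝ)+7) * ((n:ℝ)*x) := by
      linear_combination S3 - (8*(a:ℝ)+c-d-((n:ℝ)+1))*x*hx2
    exact mul_right_cancel₀ (mul_ne_zero hnne hxne) h3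
  have haN : a = 1 := by
    have : (a:ℝ) = 1 := by linarith
    exact_mod_cast this
  have hdN : d = 1 := by
    have : (d:ℝ) = 1 := by linarith
    exact_mod_cast this
  have hcN : c = n := by
    have : (c:ℝ) = n := by linarith
    exact_mod_cast this
  -- partition of cards
  have h0univ : (univ : Finset (Fin (n+1) ⊕ Fin (n+1))).card = 2*(n+1) := by
    rw [Finset.card_univ]
    simp only [Fintype.card_sum, Fintype.card_fin]
    omega
  have hprt : (univ : Finset (Fin (n+1) ⊕ Fin (n+1))).card = a + (b + (c + d)) := by
    have key : ∀ i ∈ (univ : Finset (Fin (n+1) ⊕ Fin (n+1))),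
        (1:ℕ) = (if hH.eigenvalues i = 2*x then 1 else 0) +
          ((if hH.eigenvalues i = 0 then 1 else 0) +
            ((if hH.eigenvalues i = x then 1 else 0) + (if hH.eigenvalues i = -x then 1 else 0))) := by
      intro i _
      rcases hev i with h|h|h|h <;> rw [h] <;>
        simp [hxne, d1, d2, d3, d4, d5, d6, d7, d8, d9]
    rw [Finset.card_eq_sum_ones, Finset.sum_congr rfl key, Finset.sum_add_distrib,
      Finset.sum_add_distrib, Finset.sum_add_distrib,
      ← Finset.sum_filter, ← Finset.sum_filter, ← Finset.sum_filter, ← Finset.sum_filter,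
      Finset.sum_const, Finset.sum_const, Finset.sum_const, Finset.sum_const]
    simp only [smul_eq_mul, mul_one, ← ha, ← hb, ← hcdef, ← hd]
  have hbN : b = n := by omega
  -- negative eigenvalues
  have hlt : (univ.filter (fun i => hH.eigenvalues i < 0)) = (univ.filter (fun i => hH.eigenvalues i = -x)) := by
    apply Finset.filter_congr
    intro i _
    constructor
    · intro hlt0
      rcases hev i with h|h|h|h
      · rw [h] at hlt0; linarith
      · rw [h] at hlt0; linarith
      · exact h
      · rw [h] at hlt0; linarith
    · intro h
      rw [h]; linarith
  -- rank and kernel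
  have hrank : C.rank = n + 2 := by
    rw [hH.rank_eq_card_non_zero_eigs, Fintype.card_subtype]
    have hcc := Finset.card_filter_add_card_filter_not
      (s := (univ : Finset (Fin (n+1) ⊕ Fin (n+1)))) (p := fun i => hH.eigenvalues i = 0)
    have hfeq : (univ.filter (fun i => hH.eigenvalues i ≠ 0)).card
        = (univ.filter (fun i => ¬ hH.eigenvalues i = 0)).card := rfl
    rw [hfeq]
    omega
  have hker : finrank ℝ (LinearMap.ker C.mulVecLin) = n := by
    have hrn := LinearMap.finrank_range_add_finrank_ker C.mulVecLin
    have hdom : finrank ℝ ((Fin (n+1) ⊕ Fin (n+1)) → ℝ) = 2*(n+1) := by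
      rw [Module.finrank_fintype_fun_eq_card]
      simp only [Fintype.card_sum, Fintype.card_fin]
      omega
    have hrr : C.rank = finrank ℝ (LinearMap.range C.mulVecLin) := rfl
    rw [hdom] at hrn
    omega
  refine ⟨haN, hbN, hcN, hdN, hker, ?_⟩
  rw [hlt]
  exact hdN
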